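/- Let f(X) = a₀X⁴ + 4a₁X³ + 6a₂X² + 4a₃X + a₄ be a real quartic polynomial and let ξ₁ be a real root of f, i.e. f(ξ₁) = 0. Let ξ₀ and ξ be real numbers distinct from ξ₁ and from each other, with f(ξ₀) ≥ 0 and f(ξ) ≥ 0. Define P₁ = f'(ξ₁)/(4(ξ₀−ξ₁)) + f''(ξ₁)/24, P₂ = f'(ξ₁)/(4(ξ−ξ₁)) + f''(ξ₁)/24, Q₁ = −f'(ξ₁)·√(f(ξ₀))/(4(ξ₀−ξ₁)²), Q₂ = −f'(ξ₁)·√(f(ξ))/(4(ξ−ξ₁)²). If P₁ ≠ P₂, then (1/4)·((Q₁ + Q₂)/(P₁ − P₂))² − P₁ − P₂ = (√(f(ξ)·f(ξ₀)) + f(ξ₀))/(2(ξ−ξ₀)²) + f'(ξ₀)/(4(ξ−ξ₀)) + f''(ξ₀)/24. -/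

import Mathlib

/-- The addition-theorem identity (Eq. (48) of the paper) showing that the single
Biermann–Weierstrass formula remains valid across a turning point `ξ₁`. -/
theorem turning_point_addition_identity
    (a₀ a₁ a₂ a₃ a₄ : ℝ)
    (f f' f'' : ℝ → ℝ)
    (hf : f = fun X => a₀ * X ^ 4 + 4 * a₁ * X ^ 3 + 6 * a₂ * X ^ 2 + 4 * a₃ * X + a₄)
    (hf' : f' = fun X => 4 * a₀ * X ^ 3 + 12 * a₁ * X ^ 2 + 12 * a₂ * X + 4 * a₃)
    (hf'' : f'' = fun X => 12 * a₀ * X ^ 2 + 24 * a₁ * X + 12 * a₂)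
    (ξ₁ : ℝ) (hroot : f ξ₁ = 0)
    (ξ₀ ξ : ℝ) (h₀₁ : ξ₀ ≠ ξ₁) (h₁ : ξ ≠ ξ₁) (h₀ : ξ ≠ ξ₀)
    (hfξ₀ : 0 ≤ f ξ₀) (hfξ : 0 ≤ f ξ)
    (P₁ P₂ Q₁ Q₂ : ℝ)
    (hP₁ : P₁ = f' ξ₁ / (4 * (ξ₀ - ξ₁)) + f'' ξ₁ / 24)
    (hP₂ : P₂ = f' ξ₁ / (4 * (ξ - ξ₁)) + f'' ξ₁ / 24)
    (hQ₁ : Q₁ = -f' ξ₁ * Real.sqrt (f ξ₀) / (4 * (ξ₀ - ξ₁) ^ 2))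
    (hQ₂ : Q₂ = -f' ξ₁ * Real.sqrt (f ξ) / (4 * (ξ - ξ₁) ^ 2))
    (hPP : P₁ ≠ P₂) :
    (1 / 4) * ((Q₁ + Q₂) / (P₁ - P₂)) ^ 2 - P₁ - P₂
      = (Real.sqrt (f ξ * f ξ₀) + f ξ₀) / (2 * (ξ - ξ₀) ^ 2)
        + f' ξ₀ / (4 * (ξ - ξ₀)) + f'' ξ₀ / 24 := by
  have hu : ξ₀ - ξ₁ ≠ 0 := sub_ne_zero.mpr h₀₁
  have hv : ξ - ξ₁ ≠ 0 := sub_ne_zero.mpr h₁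
  have hw : ξ - ξ₀ ≠ 0 := sub_ne_zero.mpr h₀
  set s₀ := Real.sqrt (f ξ₀) with hs₀def
  set s := Real.sqrt (f ξ) with hsdef
  have hsq : Real.sqrt (f ξ * f ξ₀) = s * s₀ := Real.sqrt_mul hfξ (f ξ₀)
  have h2₀ : s₀ ^ 2 = f ξ₀ := Real.sq_sqrt hfξ₀
  have h2 : s ^ 2 = f ξ := Real.sq_sqrt hfξ
  have hA : f' ξ₁ ≠ 0 := by
    intro h
    apply hPP
    rw [hP₁, hP₂, h]
    simp
  have hPPne : P₁ - P₂ ≠ 0 := sub_ne_zero.mpr hPP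
  have hPQ : (Q₁ + Q₂) / (P₁ - P₂)
      = -(s₀ * (ξ - ξ₁) ^ 2 + s * (ξ₀ - ξ₁) ^ 2) / ((ξ₀ - ξ₁) * (ξ - ξ₁) * (ξ - ξ₀)) := by
    rw [div_eq_div_iff hPPne (by positivity)]
    rw [hP₁, hP₂, hQ₁, hQ₂, hf', hf'']
    field_simp
    ring
  rw [hPQ, hsq, hP₁, hP₂]
  simp only [hf, hf', hf''] at h2₀ h2 hroot ⊢
  field_simp
  linear_combination (48 * (ξ - ξ₁) ^ 4) * h2₀ + (48 * (ξ₀ - ξ₁) ^ 4) * h2 + (48 * ((ξ - ξ₁) ^ 2 - (ξ₀ - ξ₁) ^ 2) ^ 2) * hroot
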